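/- arXiv:2311.17105 — 2 statements merged into one kernel-verified Lean document; each statement's English description precedes it below -/
import Mathlib

section
/- The expected OKS E_{p~N(μ,σ²I)}[exp(−‖p̂ − p‖²/(2l²))] as a function of p̂ is maximized at p̂ = μ, with maximum value l²/(σ² + l²) = 1 − σ²/(σ² + l²). -/
open MeasureTheory Real RealInnerProductSpace

local notation "E2" => EuclideanSpace ℝ (Fin 2)

lemma oks_complete_square (a b : ℝ) (hab : a + b ≠ 0) (μ w p : E2) :
    a * ‖p - μ‖ ^ 2 + b * ‖p - w‖ ^ 2 =
      (a + b) * ‖p - (a + b)⁻¹ • (a • μ + b • w)‖ ^ 2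
        + (a * b / (a + b)) * ‖μ - w‖ ^ 2 := by
  simp only [norm_sub_sq_real, inner_smul_right, inner_add_right,
    norm_smul, norm_add_sq_real, inner_smul_left, inner_smul_right,
    RCLike.conj_to_real, mul_pow, Real.norm_eq_abs, sq_abs, real_inner_comm μ w]
  field_simp
  ring

lemma oks_gauss_integral (a b : ℝ) (ha : 0 < a) (hb : 0 < b) (μ w : E2) :
    (∫ p : E2, rexp (-(a * ‖p - μ‖ ^ 2 + b * ‖p - w‖ ^ 2))) =
      π / (a + b) * rexp (-(a * b / (a + b)) * ‖μ - w‖ ^ 2) := by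
  have hab : (0:ℝ) < a + b := by linarith
  set c : E2 := (a + b)⁻¹ • (a • μ + b • w) with hc
  have key : ∀ p : E2, rexp (-(a * ‖p - μ‖ ^ 2 + b * ‖p - w‖ ^ 2)) =
      rexp (-((a + b) * ‖p - c‖ ^ 2)) * rexp (-(a * b / (a + b)) * ‖μ - w‖ ^ 2) := by
    intro p
    rw [← Real.exp_add, oks_complete_square a b hab.ne' μ w p]
    ring_nf
    rw [hc]
  simp_rw [key]
  rw [integral_mul_const]
  congr 1
  calc (∫ p : E2, rexp (-((a + b) * ‖p - c‖ ^ 2)))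
      = ∫ p : E2, rexp (-((a + b) * ‖p‖ ^ 2)) :=
        integral_sub_right_eq_self (μ := (volume : Measure E2))
          (fun p : E2 => rexp (-((a + b) * ‖p‖ ^ 2))) c
    _ = ∫ p : E2, rexp (-(a + b) * ‖p‖ ^ 2) := by simp_rw [neg_mul]
    _ = (π / (a + b)) ^ ((Module.finrank ℝ E2 : ℝ) / 2) :=
        GaussianFourier.integral_rexp_neg_mul_sq_norm hab
    _ = π / (a + b) := by
        rw [finrank_euclideanSpace_fin]
        norm_num

/-- The expected OKS as a function of the prediction is maximized at the mean,
with maximum value `l²/(σ² + l²) = 1 - σ²/(σ² + l²)`. -/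
theorem expected_oks_maximized_at_mean (μ : EuclideanSpace ℝ (Fin 2)) (σ l : ℝ)
    (hσ : 0 < σ) (hl : 0 < l) :
    (∀ phat : EuclideanSpace ℝ (Fin 2),
        (∫ p : EuclideanSpace ℝ (Fin 2),
            (1 / (2 * π * σ ^ 2)) * Real.exp (-‖p - μ‖ ^ 2 / (2 * σ ^ 2)) *
              Real.exp (-‖phat - p‖ ^ 2 / (2 * l ^ 2))) ≤
          (∫ p : EuclideanSpace ℝ (Fin 2),
            (1 / (2 * π * σ ^ 2)) * Real.exp (-‖p - μ‖ ^ 2 / (2 * σ ^ 2)) *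
              Real.exp (-‖μ - p‖ ^ 2 / (2 * l ^ 2)))) ∧
    (∫ p : EuclideanSpace ℝ (Fin 2),
        (1 / (2 * π * σ ^ 2)) * Real.exp (-‖p - μ‖ ^ 2 / (2 * σ ^ 2)) *
          Real.exp (-‖μ - p‖ ^ 2 / (2 * l ^ 2))) = l ^ 2 / (σ ^ 2 + l ^ 2) ∧
    l ^ 2 / (σ ^ 2 + l ^ 2) = 1 - σ ^ 2 / (σ ^ 2 + l ^ 2) := by
  have hσ2 : (0:ℝ) < σ ^ 2 := by positivity
  have hl2 : (0:ℝ) < l ^ 2 := by positivity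
  have hπ : (0:ℝ) < π := Real.pi_pos
  set a : ℝ := (2 * σ ^ 2)⁻¹ with ha
  set b : ℝ := (2 * l ^ 2)⁻¹ with hb
  have ha0 : 0 < a := by positivity
  have hb0 : 0 < b := by positivity
  have hab : (0:ℝ) < a + b := by linarith
  -- compute the integral for any phat
  have main : ∀ phat : E2,
      (∫ p : E2, (1 / (2 * π * σ ^ 2)) * Real.exp (-‖p - μ‖ ^ 2 / (2 * σ ^ 2)) *
          Real.exp (-‖phat - p‖ ^ 2 / (2 * l ^ 2))) =
        l ^ 2 / (σ ^ 2 + l ^ 2) * rexp (-(a * b / (a + b)) * ‖μ - phat‖ ^ 2) := by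
    intro phat
    have key : ∀ p : E2,
        (1 / (2 * π * σ ^ 2)) * Real.exp (-‖p - μ‖ ^ 2 / (2 * σ ^ 2)) *
            Real.exp (-‖phat - p‖ ^ 2 / (2 * l ^ 2)) =
          (1 / (2 * π * σ ^ 2)) * rexp (-(a * ‖p - μ‖ ^ 2 + b * ‖p - phat‖ ^ 2)) := by
      intro p
      rw [mul_assoc, ← Real.exp_add, norm_sub_rev phat p]
      congr 1
      rw [ha, hb]
      field_simp
      ring
    simp_rw [key]
    rw [integral_const_mul, oks_gauss_integral a b ha0 hb0 μ phat]
    have hcoef : 1 / (2 * π * σ ^ 2) * (π / (a + b)) = l ^ 2 / (σ ^ 2 + l ^ 2) := by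
      rw [ha, hb]
      have hsl : σ ^ 2 + l ^ 2 ≠ 0 := by positivity
      field_simp
      ring
    rw [← mul_assoc, hcoef]
  have hmax : (∫ p : E2, (1 / (2 * π * σ ^ 2)) * Real.exp (-‖p - μ‖ ^ 2 / (2 * σ ^ 2)) *
      Real.exp (-‖μ - p‖ ^ 2 / (2 * l ^ 2))) = l ^ 2 / (σ ^ 2 + l ^ 2) := by
    rw [main μ]
    simp
  refine ⟨fun phat => ?_, hmax, ?_⟩
  · rw [main phat, hmax]
    have h1 : rexp (-(a * b / (a + b)) * ‖μ - phat‖ ^ 2) ≤ 1 := by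
      rw [Real.exp_le_one_iff]
      have : 0 ≤ a * b / (a + b) * ‖μ - phat‖ ^ 2 := by positivity
      linarith
    have h2 : (0:ℝ) ≤ l ^ 2 / (σ ^ 2 + l ^ 2) := by positivity
    nlinarith
  · have hsl : σ ^ 2 + l ^ 2 ≠ 0 := by positivity
    field_simp
    ring
end

section
/- Optimal heatmap is a widened Gaussian: if the ground-truth heatmap value at pixel m is h_m(p) = exp(−‖m − p‖²/(2l̃²)) with p ~ N(μ, σ²I), then the pointwise MSE-optimal prediction is ĥ(m) = E_p[h_m(p)] = (l̃²/(σ² + l̃²)) · exp(−‖m − μ‖²/(2(σ² + l̃²))), i.e. a Gaussian bump with effective variance σ² + l̃² and peak value l̃²/(σ² + l̃²) attained at m = μ. -/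
open MeasureTheory Real

lemma conv1d (a b σ l : ℝ) (hσ : 0 < σ) (hl : 0 < l) :
    ∫ t : ℝ, Real.exp (-(t - a)^2/(2*σ^2) + -(b - t)^2/(2*l^2)) =
      Real.sqrt (2*π*(σ^2*l^2/(σ^2+l^2))) * Real.exp (-(b-a)^2/(2*(σ^2+l^2))) := by
  have hσ2 : (σ:ℝ)^2 ≠ 0 := by positivity
  have hl2 : (l:ℝ)^2 ≠ 0 := by positivity
  have hsum : σ^2 + l^2 ≠ 0 := by positivity
  set A : ℝ := (σ^2+l^2)/(2*σ^2*l^2) with hA_def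
  set c : ℝ := (a*l^2 + b*σ^2)/(σ^2+l^2) with hc_def
  have hA : 0 < A := by positivity
  have key : ∀ t : ℝ, -(t - a)^2/(2*σ^2) + -(b - t)^2/(2*l^2)
      = -A*(t-c)^2 + (-(b-a)^2/(2*(σ^2+l^2))) := by
    intro t
    rw [hA_def, hc_def]
    field_simp
    ring
  simp_rw [key, Real.exp_add, integral_mul_const]
  have : (∫ t : ℝ, Real.exp (-A*(t-c)^2)) = ∫ t : ℝ, Real.exp (-A*t^2) :=
    integral_sub_right_eq_self (fun t => Real.exp (-A*t^2)) c
  rw [this, integral_gaussian]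
  congr 1
  rw [hA_def]
  congr 1
  field_simp

lemma conv2d (μ m : EuclideanSpace ℝ (Fin 2)) (σ l : ℝ) (hσ : 0 < σ) (hl : 0 < l) :
    ∫ p : EuclideanSpace ℝ (Fin 2),
        Real.exp (-‖p - μ‖ ^ 2 / (2 * σ ^ 2)) * Real.exp (-‖m - p‖ ^ 2 / (2 * l ^ 2)) =
      (2*π*(σ^2*l^2/(σ^2+l^2))) * Real.exp (-‖m - μ‖ ^ 2 / (2 * (σ ^ 2 + l ^ 2))) := by
  have mp := (EuclideanSpace.volume_preserving_symm_measurableEquiv_toLp (Fin 2)).symm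
  rw [← mp.integral_comp (MeasurableEquiv.measurableEmbedding _)]
  have step : ∀ x : Fin 2 → ℝ,
      (fun p : EuclideanSpace ℝ (Fin 2) =>
        Real.exp (-‖p - μ‖ ^ 2 / (2 * σ ^ 2)) * Real.exp (-‖m - p‖ ^ 2 / (2 * l ^ 2)))
        ((MeasurableEquiv.toLp 2 (Fin 2 → ℝ)).symm.symm x)
      = ∏ i : Fin 2, Real.exp (-(x i - μ i)^2/(2*σ^2) + -(m i - x i)^2/(2*l^2)) := by
    intro x
    simp only [← Real.exp_sum]
    rw [← Real.exp_add]
    congr 1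
    have coord : ∀ i, ((MeasurableEquiv.toLp 2 (Fin 2 → ℝ)).symm.symm x) i = x i := fun i => rfl
    rw [EuclideanSpace.norm_eq, EuclideanSpace.norm_eq,
      Real.sq_sqrt (by positivity), Real.sq_sqrt (by positivity),
      Finset.sum_add_distrib]
    congr 1 <;>
    · rw [neg_div, ← Finset.sum_div, ← neg_div, Finset.sum_neg_distrib]
      congr 1
      congr 1
      refine Finset.sum_congr rfl fun i _ => ?_
      simp [coord, sq_abs, PiLp.sub_apply]
  simp_rw [step]
  rw [integral_fintype_prod_volume_eq_prod (f := fun i (t : ℝ) =>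
    Real.exp (-(t - μ i)^2/(2*σ^2) + -(m i - t)^2/(2*l^2)))]
  have := fun i : Fin 2 => conv1d (μ i) (m i) σ l hσ hl
  simp_rw [this]
  rw [Fin.prod_univ_two]
  have hK : (0:ℝ) ≤ 2*π*(σ^2*l^2/(σ^2+l^2)) := by positivity
  rw [show ∀ a b c d : ℝ, (a*b)*(c*d) = (a*c)*(b*d) from fun a b c d => by ring,
    Real.mul_self_sqrt hK, ← Real.exp_add]
  congr 1
  rw [EuclideanSpace.norm_eq, Real.sq_sqrt (by positivity), Fin.sum_univ_two]
  simp only [PiLp.sub_apply, Real.norm_eq_abs, sq_abs]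
  ring_nf

/-- The MSE-optimal heatmap is a widened Gaussian with effective variance
`σ² + l̃²` peaking at `μ` with value `l̃²/(σ² + l̃²)`. -/
theorem optimal_heatmap_widened_gaussian (μ : EuclideanSpace ℝ (Fin 2))
    (σ ltil : ℝ) (hσ : 0 < σ) (hl : 0 < ltil) :
    (∀ m : EuclideanSpace ℝ (Fin 2),
        (∫ p : EuclideanSpace ℝ (Fin 2),
            (1 / (2 * π * σ ^ 2)) * Real.exp (-‖p - μ‖ ^ 2 / (2 * σ ^ 2)) *
              Real.exp (-‖m - p‖ ^ 2 / (2 * ltil ^ 2))) =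
          (ltil ^ 2 / (σ ^ 2 + ltil ^ 2)) *
            Real.exp (-‖m - μ‖ ^ 2 / (2 * (σ ^ 2 + ltil ^ 2)))) ∧
    (∀ m : EuclideanSpace ℝ (Fin 2),
        (ltil ^ 2 / (σ ^ 2 + ltil ^ 2)) *
            Real.exp (-‖m - μ‖ ^ 2 / (2 * (σ ^ 2 + ltil ^ 2))) ≤
          ltil ^ 2 / (σ ^ 2 + ltil ^ 2)) ∧
    (ltil ^ 2 / (σ ^ 2 + ltil ^ 2)) *
        Real.exp (-‖μ - μ‖ ^ 2 / (2 * (σ ^ 2 + ltil ^ 2))) =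
      ltil ^ 2 / (σ ^ 2 + ltil ^ 2) := by
  have hπ := Real.pi_ne_zero
  have hσ2 : (σ:ℝ)^2 ≠ 0 := by positivity
  have hsum : σ^2 + ltil^2 ≠ 0 := by positivity
  refine ⟨fun m => ?_, fun m => ?_, ?_⟩
  · simp_rw [mul_assoc, integral_const_mul, conv2d μ m σ ltil hσ hl, ← mul_assoc]
    congr 1
    field_simp
  · have h1 : Real.exp (-‖m - μ‖ ^ 2 / (2 * (σ ^ 2 + ltil ^ 2))) ≤ 1 := by
      rw [Real.exp_le_one_iff]
      apply div_nonpos_of_nonpos_of_nonneg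
      · exact neg_nonpos.mpr (sq_nonneg _)
      · positivity
    exact mul_le_of_le_one_right (by positivity) h1
  · simp
end
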